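/- Let A1^1, A1^2 be real numbers, A2^1 > (A1^1)^2/4 and A2^2 > (A1^2)^2/4 real numbers, b1, b2 > 0 positive reals, and r a real number. Suppose v1, v2 : [0,∞) → ℂ are bounded, twice continuously differentiable functions satisfying v_k'' - i·A1^k·v_k' - A2^k·v_k = 0 for k=1,2, together with the coupling conditions v1(0) = v2(0) and i·(b1·v1'(0) + b2·v2'(0)) = r·v1(0). Then v1 ≡ 0 and v2 ≡ 0. -/

import Mathlib

open Complex Set

lemma expgrow (lam : ℂ) (u : ℝ → ℂ) (hc : Continuous u)
    (hD : ∀ t : ℝ, 0 ≤ t → HasDerivAt u (lam * u t) t) :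
    ∀ t : ℝ, 0 ≤ t → u t = Complex.exp (lam * t) * u 0 := by
  intro t ht
  have hg : ∀ x : ℝ, 0 ≤ x →
      HasDerivAt (fun s : ℝ => Complex.exp (-lam * s) * u s) 0 x := by
    intro x hx
    have hid : HasDerivAt (fun s : ℝ => (s : ℂ)) 1 x := by
      simpa using (hasDerivAt_id x).ofReal_comp
    have h1 : HasDerivAt (fun s : ℝ => Complex.exp (-lam * (s : ℂ)))
        (Complex.exp (-lam * x) * -lam) x := by
      simpa using (hid.const_mul (-lam)).cexp
    have h2 := h1.mul (hD x hx)
    convert h2 using 1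
    · rfl
    · rfl
    · ring
  have hgc : ContinuousOn (fun s : ℝ => Complex.exp (-lam * s) * u s) (Icc 0 t) :=
    ((Complex.continuous_exp.comp (continuous_const.mul Complex.continuous_ofReal)).mul
      hc).continuousOn
  have hconst := constant_of_has_deriv_right_zero hgc
    (fun x hx => (hg x hx.1).hasDerivWithinAt) t ⟨ht, le_rfl⟩
  simp only [Complex.ofReal_zero, mul_zero, Complex.exp_zero, one_mul] at hconst
  have h3 : lam * t + -lam * t = 0 := by ring
  calc u t = Complex.exp (lam * t) * (Complex.exp (-lam * t) * u t) := by
        rw [← mul_assoc, ← Complex.exp_add, h3, Complex.exp_zero, one_mul]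
    _ = Complex.exp (lam * t) * u 0 := by rw [hconst]

lemma key (A1 A2 : ℝ) (h : A2 > A1 ^ 2 / 4) (v : ℝ → ℂ) (hv : ContDiff ℝ 2 v)
    (hbdd : ∃ C : ℝ, ∀ t : ℝ, 0 ≤ t → ‖v t‖ ≤ C)
    (hode : ∀ t : ℝ, 0 < t →
      deriv (deriv v) t - Complex.I * (A1 : ℂ) * deriv v t - (A2 : ℂ) * v t = 0) :
    deriv v 0 = (-(Real.sqrt (A2 - A1 ^ 2 / 4) : ℂ) + ((A1 / 2 : ℝ) : ℂ) * Complex.I) * v 0 ∧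
    ∀ t : ℝ, 0 ≤ t → v t = Complex.exp
      ((-(Real.sqrt (A2 - A1 ^ 2 / 4) : ℂ) + ((A1 / 2 : ℝ) : ℂ) * Complex.I) * t) * v 0 := by
  set δ : ℝ := Real.sqrt (A2 - A1 ^ 2 / 4) with hδdef
  have hδpos : 0 < δ := Real.sqrt_pos.2 (by linarith)
  have hδ2 : δ ^ 2 = A2 - A1 ^ 2 / 4 := Real.sq_sqrt (by linarith)
  set lp : ℂ := (δ : ℂ) + ((A1 / 2 : ℝ) : ℂ) * Complex.I with hlp
  set lm : ℂ := -(δ : ℂ) + ((A1 / 2 : ℝ) : ℂ) * Complex.I with hlm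
  have hδc : ((δ : ℂ)) ^ 2 = (A2 : ℂ) - (A1 : ℂ) ^ 2 / 4 := by
    rw [← Complex.ofReal_pow, hδ2]; push_cast; ring
  have hsum : lp + lm = Complex.I * (A1 : ℂ) := by
    rw [hlp, hlm]; push_cast; ring
  have hprod : lm * lp = -(A2 : ℂ) := by
    rw [hlp, hlm]; push_cast
    linear_combination (-1 : ℂ) * hδc + ((A1 : ℂ) ^ 2 / 4) * Complex.I_sq
  -- regularity
  have hv2 : ContDiff ℝ (1 + 1 : ℕ) v := by exact_mod_cast hv
  rw [show ((1 + 1 : ℕ) : WithTop ℕ∞) = (1 : WithTop ℕ∞) + 1 by norm_cast] at hv2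
  have hdv : Differentiable ℝ v := (contDiff_succ_iff_deriv.mp hv2).1
  have hv' : ContDiff ℝ 1 (deriv v) := (contDiff_succ_iff_deriv.mp hv2).2.2
  have hdv' : Differentiable ℝ (deriv v) := hv'.differentiable one_ne_zero
  have hcont2 : Continuous (deriv (deriv v)) := hv'.continuous_deriv le_rfl
  -- ODE holds at 0 by continuity
  have hode0 : ∀ t : ℝ, 0 ≤ t →
      deriv (deriv v) t = Complex.I * (A1 : ℂ) * deriv v t + (A2 : ℂ) * v t := by
    intro t ht
    rcases ht.lt_or_eq with h' | h'
    · linear_combination hode t h'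
    · subst h'
      set F : ℝ → ℂ := fun s =>
        deriv (deriv v) s - Complex.I * (A1 : ℂ) * deriv v s - (A2 : ℂ) * v s with hF
      have hFc : Continuous F :=
        (hcont2.sub (continuous_const.mul hdv'.continuous)).sub
          (continuous_const.mul hdv.continuous)
      have h1 : Filter.Tendsto F (nhdsWithin 0 (Ioi 0)) (nhds (F 0)) :=
        (hFc.continuousAt).continuousWithinAt.tendsto
      have h2 : Filter.Tendsto F (nhdsWithin 0 (Ioi 0)) (nhds 0) := by
        refine Filter.Tendsto.congr' ?_ tendsto_const_nhds
        filter_upwards [self_mem_nhdsWithin] with x hx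
        exact (hode x hx).symm
      have hF0 : F 0 = 0 := tendsto_nhds_unique h1 h2
      rw [hF] at hF0
      linear_combination hF0
  -- the two first-order factors
  set u : ℝ → ℂ := fun s => deriv v s - lp * v s with hu
  set w : ℝ → ℂ := fun s => deriv v s - lm * v s with hw
  have hucont : Continuous u := hdv'.continuous.sub (continuous_const.mul hdv.continuous)
  have hwcont : Continuous w := hdv'.continuous.sub (continuous_const.mul hdv.continuous)
  have huD : ∀ t : ℝ, 0 ≤ t → HasDerivAt u (lm * u t) t := by
    intro t ht
    have h0 : HasDerivAt u (deriv (deriv v) t - lp * deriv v t) t :=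
      ((hdv' t).hasDerivAt).sub (((hdv t).hasDerivAt).const_mul lp)
    have heq : deriv (deriv v) t - lp * deriv v t = lm * u t := by
      rw [hode0 t ht, hu]
      linear_combination (-(deriv v t)) * hsum + (v t) * hprod
    rwa [heq] at h0
  have hwD : ∀ t : ℝ, 0 ≤ t → HasDerivAt w (lp * w t) t := by
    intro t ht
    have h0 : HasDerivAt w (deriv (deriv v) t - lm * deriv v t) t :=
      ((hdv' t).hasDerivAt).sub (((hdv t).hasDerivAt).const_mul lm)
    have heq : deriv (deriv v) t - lm * deriv v t = lp * w t := by
      rw [hode0 t ht, hw]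
      linear_combination (-(deriv v t)) * hsum + (v t) * hprod
    rwa [heq] at h0
  have huF := expgrow lm u hucont huD
  have hwF := expgrow lp w hwcont hwD
  -- boundedness kills w 0
  obtain ⟨C, hC⟩ := hbdd
  have hw0 : w 0 = 0 := by
    by_contra hW
    have hWn : 0 < ‖w 0‖ := norm_pos_iff.2 hW
    have hrep : ∀ t : ℝ, (lp * (t : ℂ)).re = δ * t := by
      intro t; rw [hlp]; simp [Complex.mul_re]
    have hrem : ∀ t : ℝ, (lm * (t : ℂ)).re = -(δ * t) := by
      intro t; rw [hlm]; simp [Complex.mul_re]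
    have hkey : ∀ t : ℝ, 0 ≤ t → ‖w 0‖ * Real.exp (δ * t) ≤ 2 * δ * C + ‖u 0‖ := by
      intro t ht
      have hdiff : w t - u t = (lp - lm) * v t := by
        rw [hu, hw]; ring
      have hwt : ‖w t‖ = ‖w 0‖ * Real.exp (δ * t) := by
        rw [hwF t ht, norm_mul, Complex.norm_exp,
          hrep t, mul_comm]
      have hut : ‖u t‖ ≤ ‖u 0‖ := by
        rw [huF t ht, norm_mul, Complex.norm_exp,
          hrem t]
        have : Real.exp (-(δ * t)) ≤ 1 := Real.exp_le_one_iff.2 (by nlinarith)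
        nlinarith [norm_nonneg (u 0)]
      have hlplm : ‖lp - lm‖ = 2 * δ := by
        have : lp - lm = ((2 * δ : ℝ) : ℂ) := by rw [hlp, hlm]; push_cast; ring
        rw [this, Complex.norm_real, Real.norm_eq_abs, abs_of_pos (by linarith)]
      have h1 : ‖w t‖ ≤ ‖(lp - lm) * v t‖ + ‖u t‖ := by
        calc ‖w t‖ = ‖(lp - lm) * v t + u t‖ := by rw [← hdiff]; ring_nf
          _ ≤ ‖(lp - lm) * v t‖ + ‖u t‖ := norm_add_le _ _
      have h2 : ‖(lp - lm) * v t‖ ≤ 2 * δ * C := by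
        rw [norm_mul, hlplm]
        have := hC t ht
        nlinarith
      rw [hwt] at h1; linarith
    have htend : Filter.Tendsto (fun t : ℝ => ‖w 0‖ * Real.exp (δ * t))
        Filter.atTop Filter.atTop := by
      apply Filter.Tendsto.const_mul_atTop hWn
      exact Real.tendsto_exp_atTop.comp (Filter.Tendsto.const_mul_atTop hδpos Filter.tendsto_id)
    obtain ⟨t, htM, htpos⟩ :=
      ((htend.eventually_gt_atTop (2 * δ * C + ‖u 0‖)).and (Filter.eventually_ge_atTop 0)).exists
    exact absurd (hkey t htpos) (not_le.2 htM)
  -- conclusions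
  have hderiv0 : deriv v 0 = lm * v 0 := by
    have : w 0 = deriv v 0 - lm * v 0 := rfl
    rw [this] at hw0; linear_combination hw0
  constructor
  · rw [hlm] at hderiv0; exact hderiv0
  · intro t ht
    have hwt0 : w t = 0 := by rw [hwF t ht, hw0, mul_zero]
    have hdiff : w t - u t = (lp - lm) * v t := by rw [hu, hw]; ring
    have hdiff0 : w 0 - u 0 = (lp - lm) * v 0 := by rw [hu, hw]; ring
    have hut := huF t ht
    have hne : lp - lm ≠ 0 := by
      rw [hlp, hlm]
      intro hc
      have : ((2 * δ : ℝ) : ℂ) = 0 := by push_cast; linear_combination hc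
      have : (2 * δ : ℝ) = 0 := by exact_mod_cast this
      linarith
    have hfinal : (lp - lm) * (v t - Complex.exp (lm * t) * v 0) = 0 := by
      have e1 : (lp - lm) * v t = -u t := by rw [← hdiff, hwt0]; ring
      have e2 : (lp - lm) * v 0 = -u 0 := by rw [← hdiff0, hw0]; ring
      calc (lp - lm) * (v t - Complex.exp (lm * t) * v 0)
          = (lp - lm) * v t - Complex.exp (lm * t) * ((lp - lm) * v 0) := by ring
        _ = -u t - Complex.exp (lm * t) * (-u 0) := by rw [e1, e2]
        _ = 0 := by rw [hut]; ring
    have := (mul_eq_zero.mp hfinal).resolve_left hne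
    have hvt : v t = Complex.exp (lm * t) * v 0 := by linear_combination this
    rw [hlm] at hvt; exact hvt

/-- the coupled bounded ODE system of the Complementing Condition
has only the trivial solution. -/
theorem stmt_1 (A11 A12 A21 A22 : ℝ)
    (h1 : A21 > A11 ^ 2 / 4) (h2 : A22 > A12 ^ 2 / 4)
    (b1 b2 : ℝ) (hb1 : 0 < b1) (hb2 : 0 < b2) (r : ℝ)
    (v1 v2 : ℝ → ℂ) (hv1 : ContDiff ℝ 2 v1) (hv2 : ContDiff ℝ 2 v2)
    (hbdd1 : ∃ C : ℝ, ∀ t : ℝ, 0 ≤ t → ‖v1 t‖ ≤ C)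
    (hbdd2 : ∃ C : ℝ, ∀ t : ℝ, 0 ≤ t → ‖v2 t‖ ≤ C)
    (hode1 : ∀ t : ℝ, 0 < t →
      deriv (deriv v1) t - Complex.I * (A11 : ℂ) * deriv v1 t - (A21 : ℂ) * v1 t = 0)
    (hode2 : ∀ t : ℝ, 0 < t →
      deriv (deriv v2) t - Complex.I * (A12 : ℂ) * deriv v2 t - (A22 : ℂ) * v2 t = 0)
    (hcoup1 : v1 0 = v2 0)
    (hcoup2 : Complex.I * ((b1 : ℂ) * deriv v1 0 + (b2 : ℂ) * deriv v2 0)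
      = (r : ℂ) * v1 0) :
    ∀ t : ℝ, 0 ≤ t → v1 t = 0 ∧ v2 t = 0 := by
  obtain ⟨hd1, hf1⟩ := key A11 A21 h1 v1 hv1 hbdd1 hode1
  obtain ⟨hd2, hf2⟩ := key A12 A22 h2 v2 hv2 hbdd2 hode2
  set δ1 : ℝ := Real.sqrt (A21 - A11 ^ 2 / 4) with hδ1
  set δ2 : ℝ := Real.sqrt (A22 - A12 ^ 2 / 4) with hδ2
  have hδ1pos : 0 < δ1 := Real.sqrt_pos.2 (by linarith)
  have hδ2pos : 0 < δ2 := Real.sqrt_pos.2 (by linarith)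
  set l1 : ℂ := -(δ1 : ℂ) + ((A11 / 2 : ℝ) : ℂ) * Complex.I with hl1
  set l2 : ℂ := -(δ2 : ℂ) + ((A12 / 2 : ℝ) : ℂ) * Complex.I with hl2
  -- derive v1 0 = 0
  have hz : (Complex.I * ((b1 : ℂ) * l1 + (b2 : ℂ) * l2) - (r : ℂ)) * v1 0 = 0 := by
    have h2' : deriv v2 0 = l2 * v1 0 := by rw [hd2, ← hcoup1]
    linear_combination hcoup2 - Complex.I * (b1 : ℂ) * hd1 - Complex.I * (b2 : ℂ) * h2'
  have hzne : Complex.I * ((b1 : ℂ) * l1 + (b2 : ℂ) * l2) - (r : ℂ) ≠ 0 := by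
    intro hc
    have him := congrArg Complex.im hc
    rw [hl1, hl2] at him
    simp [Complex.mul_im, Complex.mul_re, Complex.add_im, Complex.add_re] at him
    nlinarith [mul_pos hb1 hδ1pos, mul_pos hb2 hδ2pos]
  have ha : v1 0 = 0 := (mul_eq_zero.mp hz).resolve_left hzne
  intro t ht
  constructor
  · rw [hf1 t ht, ha, mul_zero]
  · rw [hf2 t ht, ← hcoup1, ha, mul_zero]
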